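/- Let p be a positive rational with √p irrational, and let x₁ = a₁ + b₁√p, …, xₙ = aₙ + bₙ√p (n ≥ 2) with all aᵢ, bᵢ ∈ ℚ, all xᵢ > 0, and such that xᵢ/xⱼ ∉ ℚ and xᵢ·xⱼ ∉ ℚ whenever i ≠ j. Suppose aᵢ − bᵢ√p < 0 for all i. If a rectangle of aspect ratio z > 0 admits a diverse tiling by rectangles with aspect ratios x₁, …, xₙ, then z = e + f√p for some rationals e, f with f > 0 and |e|/f < max_{1 ≤ i ≤ n} |aᵢ|/bᵢ. -/

import Mathlib

set_option maxHeartbeats 1000000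
set_option synthInstance.maxHeartbeats 400000


/-- A tiling of the rectangle `[0,1] × [0,r]` by finitely many closed
axis-parallel rectangles with positive side lengths, covering the rectangle
and having pairwise disjoint interiors. -/
structure RectTiling (r : ℝ) where
  m : ℕ
  px : Fin m → ℝ
  py : Fin m → ℝ
  w : Fin m → ℝ
  h : Fin m → ℝ
  w_pos : ∀ k, 0 < w k
  h_pos : ∀ k, 0 < h k
  cover : (Set.Icc (0:ℝ) 1 ×ˢ Set.Icc (0:ℝ) r) =
      ⋃ k, Set.Icc (px k) (px k + w k) ×ˢ Set.Icc (py k) (py k + h k)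
  disj : ∀ k l, k ≠ l →
      Disjoint ((Set.Ioo (px k) (px k + w k)) ×ˢ (Set.Ioo (py k) (py k + h k)))
               ((Set.Ioo (px l) (px l + w l)) ×ˢ (Set.Ioo (py l) (py l + h l)))

/-- Tile `k` of the tiling `T` has aspect ratio `x` (in one of the two orientations). -/
def RectTiling.ratioOK {r : ℝ} (T : RectTiling r) (k : Fin T.m) (x : ℝ) : Prop :=
  T.h k / T.w k = x ∨ T.w k / T.h k = x

/-- The rectangle of aspect ratio `r` is tileable by rectangles with aspect
ratios among `X`. -/
def Tileable (r : ℝ) {n : ℕ} (X : Fin n → ℝ) : Prop :=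
  ∃ T : RectTiling r, ∀ k, ∃ i, T.ratioOK k (X i)

/-- The rectangle of aspect ratio `r` admits a *diverse* tiling by rectangles
with aspect ratios `X 0, …, X (n-1)`: every tile has some ratio `X i`, and for
every `i` some tile has ratio `X i`. -/
def DiverselyTileable (r : ℝ) {n : ℕ} (X : Fin n → ℝ) : Prop :=
  ∃ T : RectTiling r, (∀ k, ∃ i, T.ratioOK k (X i)) ∧ (∀ i, ∃ k, T.ratioOK k (X i))

lemma telescope (ψ : ℕ → ℝ) (a b : ℕ) (hab : a ≤ b) :
    ∑ i ∈ Finset.Ico a b, (ψ (i+1) - ψ i) = ψ b - ψ a := by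
  induction b, hab using Nat.le_induction with
  | base => simp
  | succ b hab ih => rw [Finset.sum_Ico_succ_top (by omega), ih]; ring

lemma prod_telescope (G : ℕ → ℕ → ℝ) (a b c d : ℕ) (hab : a ≤ b) (hcd : c ≤ d) :
    ∑ q ∈ Finset.Ico a b ×ˢ Finset.Ico c d,
      (G (q.1+1) (q.2+1) - G q.1 (q.2+1) - G (q.1+1) q.2 + G q.1 q.2)
    = G b d - G a d - G b c + G a c := by
  rw [Finset.sum_product]
  have inner : ∀ i, ∑ j ∈ Finset.Ico c d,
      (G (i+1) (j+1) - G i (j+1) - G (i+1) j + G i j)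
      = (G (i+1) d - G i d) - (G (i+1) c - G i c) := by
    intro i
    have := telescope (fun j => G (i+1) j - G i j) c d hcd
    rw [← this]; apply Finset.sum_congr rfl; intro j _; ring
  calc ∑ i ∈ Finset.Ico a b, ∑ j ∈ Finset.Ico c d,
        (G (i+1) (j+1) - G i (j+1) - G (i+1) j + G i j)
      = ∑ i ∈ Finset.Ico a b, ((G (i+1) d - G (i+1) c) - (G i d - G i c)) := by
        apply Finset.sum_congr rfl; intro i _; rw [inner i]; ring
    _ = (G b d - G b c) - (G a d - G a c) := by
        have := telescope (fun i => G i d - G i c) a b hab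
        exact this
    _ = G b d - G a d - G b c + G a c := by ring

/-- enumeration of a finite set of cuts -/
lemma enum_facts (s : Finset ℝ) (lo hi : ℝ) (hlo : lo ∈ s) (hhi : hi ∈ s)
    (hbd : ∀ u ∈ s, lo ≤ u ∧ u ≤ hi) :
    ∃ (N : ℕ) (X : ℕ → ℝ), 0 < N ∧ X 0 = lo ∧ X (N-1) = hi ∧
      (∀ i j, i < N → j < N → (X i ≤ X j ↔ i ≤ j)) ∧
      (∀ i, i < N → X i ∈ s) ∧ (∀ u ∈ s, ∃ i, i < N ∧ X i = u) := by
  classical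
  set N := s.card with hN
  have hNpos : 0 < N := Finset.card_pos.2 ⟨lo, hlo⟩
  have e := s.orderIsoOfFin (rfl : s.card = N)
  refine ⟨N, fun i => (e ⟨min i (N-1), by omega⟩ : ℝ), hNpos, ?_, ?_, ?_, ?_, ?_⟩
  · -- X 0 = lo
    have hmem : ((e ⟨min 0 (N-1), by omega⟩ : s) : ℝ) ∈ s := (e _).2
    have h1 : lo ≤ (e ⟨min 0 (N-1), by omega⟩ : s) := (hbd _ hmem).1
    obtain ⟨j, hj⟩ := e.surjective ⟨lo, hlo⟩
    have h2 : (e ⟨min 0 (N-1), by omega⟩ : s) ≤ ⟨lo, hlo⟩ := by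
      rw [← hj]; exact e.monotone (by simp [Fin.le_def])
    exact le_antisymm h2 h1
  · have hmem : ((e ⟨min (N-1) (N-1), by omega⟩ : s) : ℝ) ∈ s := (e _).2
    have h1 : ((e ⟨min (N-1) (N-1), by omega⟩ : s) : ℝ) ≤ hi := (hbd _ hmem).2
    obtain ⟨j, hj⟩ := e.surjective ⟨hi, hhi⟩
    have h2 : (⟨hi, hhi⟩ : s) ≤ e ⟨min (N-1) (N-1), by omega⟩ := by
      rw [← hj]; exact e.monotone (by simp [Fin.le_def]; omega)
    exact le_antisymm h1 h2
  · intro i j hi hj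
    constructor
    · intro h
      by_contra hij
      have : (e ⟨min j (N-1), by omega⟩ : s) < e ⟨min i (N-1), by omega⟩ := by
        apply e.strictMono; simp [Fin.lt_def]; omega
      exact absurd h (not_le.2 this)
    · intro h
      exact e.monotone (by simp [Fin.le_def]; omega)
  · intro i hi; exact (e _).2
  · intro u hu
    obtain ⟨j, hj⟩ := e.surjective ⟨u, hu⟩
    refine ⟨j, j.2, ?_⟩
    have hjle : min (j:ℕ) (N-1) = (j:ℕ) := by
      have := j.2; omega
    simp only [hjle, Fin.eta, hj]

lemma tiling_biadditive {r : ℝ} (hr : 0 < r) (T : RectTiling r)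
    (B : ℝ → ℝ → ℝ)
    (hB1 : ∀ x y u, B (x + y) u = B x u + B y u)
    (hB2 : ∀ x y u, B x (y + u) = B x y + B x u) :
    B 1 r = ∑ k, B (T.w k) (T.h k) := by
  classical
  have hB01 : ∀ u, B 0 u = 0 := by
    intro u; have := hB1 0 0 u; simp at this; linarith
  have hB02 : ∀ x, B x 0 = 0 := by
    intro x; have := hB2 x 0 0; simp at this; linarith
  -- tiles lie in the box
  have hsub : ∀ k, Set.Icc (T.px k) (T.px k + T.w k) ×ˢ Set.Icc (T.py k) (T.py k + T.h k)
      ⊆ Set.Icc (0:ℝ) 1 ×ˢ Set.Icc (0:ℝ) r := by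
    intro k; rw [T.cover]
    exact Set.subset_iUnion
      (fun k => Set.Icc (T.px k) (T.px k + T.w k) ×ˢ Set.Icc (T.py k) (T.py k + T.h k)) k
  have hcorner : ∀ k, ((T.px k, T.py k) : ℝ × ℝ) ∈
      Set.Icc (T.px k) (T.px k + T.w k) ×ˢ Set.Icc (T.py k) (T.py k + T.h k) := by
    intro k
    simp only [Set.mem_prod, Set.mem_Icc]
    refine ⟨⟨?_, ?_⟩, ?_, ?_⟩ <;> linarith [T.w_pos k, T.h_pos k]
  have hcorner2 : ∀ k, ((T.px k + T.w k, T.py k + T.h k) : ℝ × ℝ) ∈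
      Set.Icc (T.px k) (T.px k + T.w k) ×ˢ Set.Icc (T.py k) (T.py k + T.h k) := by
    intro k
    simp only [Set.mem_prod, Set.mem_Icc]
    refine ⟨⟨?_, ?_⟩, ?_, ?_⟩ <;> linarith [T.w_pos k, T.h_pos k]
  have hpx0 : ∀ k, 0 ≤ T.px k := fun k => ((hsub k (hcorner k)).1).1
  have hpx1 : ∀ k, T.px k + T.w k ≤ 1 := fun k => ((hsub k (hcorner2 k)).1).2
  have hpy0 : ∀ k, 0 ≤ T.py k := fun k => ((hsub k (hcorner k)).2).1
  have hpyr : ∀ k, T.py k + T.h k ≤ r := fun k => ((hsub k (hcorner2 k)).2).2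
  -- cut sets
  set sx : Finset ℝ := insert 0 (insert 1
      ((Finset.univ.image T.px) ∪ (Finset.univ.image fun k => T.px k + T.w k))) with hsx
  set sy : Finset ℝ := insert 0 (insert r
      ((Finset.univ.image T.py) ∪ (Finset.univ.image fun k => T.py k + T.h k))) with hsy
  have hsxbd : ∀ u ∈ sx, 0 ≤ u ∧ u ≤ 1 := by
    intro u hu
    simp only [hsx, Finset.mem_insert, Finset.mem_union, Finset.mem_image,
      Finset.mem_univ, true_and] at hu
    rcases hu with rfl | rfl | ⟨k, rfl⟩ | ⟨k, rfl⟩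
    · exact ⟨le_refl _, zero_le_one⟩
    · exact ⟨zero_le_one, le_refl _⟩
    · exact ⟨hpx0 k, by linarith [hpx1 k, T.w_pos k]⟩
    · exact ⟨by linarith [hpx0 k, T.w_pos k], hpx1 k⟩
  have hsybd : ∀ u ∈ sy, 0 ≤ u ∧ u ≤ r := by
    intro u hu
    simp only [hsy, Finset.mem_insert, Finset.mem_union, Finset.mem_image,
      Finset.mem_univ, true_and] at hu
    rcases hu with rfl | rfl | ⟨k, rfl⟩ | ⟨k, rfl⟩
    · exact ⟨le_refl _, hr.le⟩
    · exact ⟨hr.le, le_refl _⟩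
    · exact ⟨hpy0 k, by linarith [hpyr k, T.h_pos k]⟩
    · exact ⟨by linarith [hpy0 k, T.h_pos k], hpyr k⟩
  obtain ⟨N, X, hNpos, hX0, hXN, hXle, hXmem, hXsurj⟩ :=
    enum_facts sx 0 1 (by simp [hsx]) (by simp [hsx]) hsxbd
  obtain ⟨M, Y, hMpos, hY0, hYM, hYle, hYmem, hYsurj⟩ :=
    enum_facts sy 0 r (by simp [hsy]) (by simp [hsy]) hsybd
  have hXlt : ∀ i j, i < N → j < N → (X i < X j ↔ i < j) := by
    intro i j hi hj
    rw [← not_le, ← not_le, not_iff_not]; exact hXle j i hj hi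
  have hYlt : ∀ i j, i < M → j < M → (Y i < Y j ↔ i < j) := by
    intro i j hi hj
    rw [← not_le, ← not_le, not_iff_not]; exact hYle j i hj hi
  -- no cut strictly inside a cell interval
  have hXgap : ∀ u ∈ sx, ∀ i, i + 1 < N → ¬ (X i < u ∧ u < X (i+1)) := by
    rintro u hu i hi ⟨h1, h2⟩
    obtain ⟨j, hj, rfl⟩ := hXsurj u hu
    have hij : i < j := (hXlt i j (by omega) hj).1 h1
    have : X (i+1) ≤ X j := (hXle (i+1) j hi hj).2 (by omega)
    linarith
  have hYgap : ∀ u ∈ sy, ∀ j, j + 1 < M → ¬ (Y j < u ∧ u < Y (j+1)) := by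
    rintro u hu j hj ⟨h1, h2⟩
    obtain ⟨i, hi, rfl⟩ := hYsurj u hu
    have hij : j < i := (hYlt j i (by omega) hi).1 h1
    have : Y (j+1) ≤ Y i := (hYle (j+1) i hj hi).2 (by omega)
    linarith
  -- membership of tile boundaries in cut sets
  have hpxmem : ∀ k, T.px k ∈ sx := by
    intro k
    have : T.px k ∈ Finset.univ.image T.px := Finset.mem_image_of_mem _ (Finset.mem_univ k)
    simp only [hsx, Finset.mem_insert, Finset.mem_union]
    tauto
  have hpxwmem : ∀ k, T.px k + T.w k ∈ sx := by
    intro k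
    have : T.px k + T.w k ∈ Finset.univ.image (fun k => T.px k + T.w k) :=
      Finset.mem_image_of_mem _ (Finset.mem_univ k)
    simp only [hsx, Finset.mem_insert, Finset.mem_union]
    tauto
  have hpymem : ∀ k, T.py k ∈ sy := by
    intro k
    have : T.py k ∈ Finset.univ.image T.py := Finset.mem_image_of_mem _ (Finset.mem_univ k)
    simp only [hsy, Finset.mem_insert, Finset.mem_union]
    tauto
  have hpyhmem : ∀ k, T.py k + T.h k ∈ sy := by
    intro k
    have : T.py k + T.h k ∈ Finset.univ.image (fun k => T.py k + T.h k) :=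
      Finset.mem_image_of_mem _ (Finset.mem_univ k)
    simp only [hsy, Finset.mem_insert, Finset.mem_union]
    tauto
  -- nonemptiness of tiles index
  have hmne : Nonempty (Fin T.m) := by
    have : ((0,0) : ℝ × ℝ) ∈ Set.Icc (0:ℝ) 1 ×ˢ Set.Icc (0:ℝ) r := by
      constructor <;> constructor <;> simp [hr.le]
    rw [T.cover] at this
    obtain ⟨s, ⟨k, rfl⟩, _⟩ := this
    exact ⟨k⟩
  -- cell-in-tile predicate
  set P : ℕ × ℕ → Fin T.m → Prop := fun c k =>
    T.px k ≤ X c.1 ∧ X (c.1+1) ≤ T.px k + T.w k ∧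
    T.py k ≤ Y c.2 ∧ Y (c.2+1) ≤ T.py k + T.h k with hP
  set cells : Finset (ℕ × ℕ) := Finset.range (N-1) ×ˢ Finset.range (M-1) with hcells
  have hcellb : ∀ c ∈ cells, c.1 + 1 < N ∧ c.2 + 1 < M := by
    intro c hc
    simp only [hcells, Finset.mem_product, Finset.mem_range] at hc
    omega
  have hXstep : ∀ i, i + 1 < N → X i < X (i+1) := by
    intro i hi; exact (hXlt i (i+1) (by omega) hi).2 (by omega)
  have hYstep : ∀ j, j + 1 < M → Y j < Y (j+1) := by
    intro j hj; exact (hYlt j (j+1) (by omega) hj).2 (by omega)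
  have hex : ∀ c ∈ cells, ∃ k, P c k := by
    intro c hc
    obtain ⟨hc1, hc2⟩ := hcellb c hc
    set xm := (X c.1 + X (c.1+1))/2 with hxm
    set ym := (Y c.2 + Y (c.2+1))/2 with hym
    have hx1 : X c.1 < xm := by rw [hxm]; linarith [hXstep c.1 hc1]
    have hx2 : xm < X (c.1+1) := by rw [hxm]; linarith [hXstep c.1 hc1]
    have hy1 : Y c.2 < ym := by rw [hym]; linarith [hYstep c.2 hc2]
    have hy2 : ym < Y (c.2+1) := by rw [hym]; linarith [hYstep c.2 hc2]
    have hXin := hsxbd _ (hXmem c.1 (by omega))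
    have hXin2 := hsxbd _ (hXmem (c.1+1) hc1)
    have hYin := hsybd _ (hYmem c.2 (by omega))
    have hYin2 := hsybd _ (hYmem (c.2+1) hc2)
    have hmm : ((xm, ym) : ℝ × ℝ) ∈ Set.Icc (0:ℝ) 1 ×ˢ Set.Icc (0:ℝ) r := by
      simp only [Set.mem_prod, Set.mem_Icc]
      refine ⟨⟨?_, ?_⟩, ?_, ?_⟩
      · linarith [hXin.1]
      · linarith [hXin2.2]
      · linarith [hYin.1]
      · linarith [hYin2.2]
    rw [T.cover] at hmm
    simp only [Set.mem_iUnion, Set.mem_prod, Set.mem_Icc] at hmm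
    obtain ⟨k, ⟨hkx, hky⟩⟩ := hmm
    refine ⟨k, ?_, ?_, ?_, ?_⟩
    · by_contra hcon
      push_neg at hcon
      exact hXgap _ (hpxmem k) c.1 hc1 ⟨hcon, lt_of_le_of_lt hkx.1 hx2⟩
    · by_contra hcon
      push_neg at hcon
      exact hXgap _ (hpxwmem k) c.1 hc1 ⟨lt_of_lt_of_le hx1 hkx.2, hcon⟩
    · by_contra hcon
      push_neg at hcon
      exact hYgap _ (hpymem k) c.2 hc2 ⟨hcon, lt_of_le_of_lt hky.1 hy2⟩
    · by_contra hcon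
      push_neg at hcon
      exact hYgap _ (hpyhmem k) c.2 hc2 ⟨lt_of_lt_of_le hy1 hky.2, hcon⟩
  have huniq : ∀ c ∈ cells, ∀ k l, P c k → P c l → k = l := by
    intro c hc k l hk hl
    by_contra hkl
    obtain ⟨hc1, hc2⟩ := hcellb c hc
    set xm := (X c.1 + X (c.1+1))/2
    set ym := (Y c.2 + Y (c.2+1))/2
    have hx1 : X c.1 < xm := by simp only [xm]; linarith [hXstep c.1 hc1]
    have hx2 : xm < X (c.1+1) := by simp only [xm]; linarith [hXstep c.1 hc1]
    have hy1 : Y c.2 < ym := by simp only [ym]; linarith [hYstep c.2 hc2]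
    have hy2 : ym < Y (c.2+1) := by simp only [ym]; linarith [hYstep c.2 hc2]
    have hmk : ((xm, ym) : ℝ × ℝ) ∈
        (Set.Ioo (T.px k) (T.px k + T.w k)) ×ˢ (Set.Ioo (T.py k) (T.py k + T.h k)) := by
      simp only [Set.mem_prod, Set.mem_Ioo]
      exact ⟨⟨lt_of_le_of_lt hk.1 hx1, lt_of_lt_of_le hx2 hk.2.1⟩,
        lt_of_le_of_lt hk.2.2.1 hy1, lt_of_lt_of_le hy2 hk.2.2.2⟩
    have hml : ((xm, ym) : ℝ × ℝ) ∈
        (Set.Ioo (T.px l) (T.px l + T.w l)) ×ˢ (Set.Ioo (T.py l) (T.py l + T.h l)) := by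
      simp only [Set.mem_prod, Set.mem_Ioo]
      exact ⟨⟨lt_of_le_of_lt hl.1 hx1, lt_of_lt_of_le hx2 hl.2.1⟩,
        lt_of_le_of_lt hl.2.2.1 hy1, lt_of_lt_of_le hy2 hl.2.2.2⟩
    exact Set.disjoint_left.1 (T.disj k l hkl) hmk hml
  haveI := hmne
  set cellTile : ℕ × ℕ → Fin T.m := fun c =>
    if h : ∃ k, P c k then h.choose else Classical.arbitrary _ with hcT
  have hspec : ∀ c, (∃ k, P c k) → P c (cellTile c) := by
    intro c h
    simp only [hcT, dif_pos h]
    exact h.choose_spec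
  -- main computation
  set F : ℝ → ℝ → ℝ → ℝ → ℝ := fun x1 x2 y1 y2 =>
    B x2 y2 - B x1 y2 - B x2 y1 + B x1 y1 with hF
  have main1 : ∑ c ∈ cells, F (X c.1) (X (c.1+1)) (Y c.2) (Y (c.2+1))
      = B 1 r := by
    have := prod_telescope (fun i j => B (X i) (Y j)) 0 (N-1) 0 (M-1)
      (by omega) (by omega)
    rw [hcells]
    have hre : Finset.range (N-1) = Finset.Ico 0 (N-1) := by
      rw [Finset.range_eq_Ico]
    have hre2 : Finset.range (M-1) = Finset.Ico 0 (M-1) := by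
      rw [Finset.range_eq_Ico]
    rw [hre, hre2]
    rw [show (∑ c ∈ Finset.Ico 0 (N-1) ×ˢ Finset.Ico 0 (M-1),
        F (X c.1) (X (c.1+1)) (Y c.2) (Y (c.2+1))) = _ from this]
    simp only [hX0, hXN, hY0, hYM, hB01, hB02]
    ring
  have main2 : ∑ c ∈ cells, F (X c.1) (X (c.1+1)) (Y c.2) (Y (c.2+1))
      = ∑ k, ∑ c ∈ cells.filter (fun c => cellTile c = k),
          F (X c.1) (X (c.1+1)) (Y c.2) (Y (c.2+1)) := by
    exact (Finset.sum_fiberwise_of_maps_to (fun c _ => Finset.mem_univ (cellTile c)) _).symm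
  have main3 : ∀ k, ∑ c ∈ cells.filter (fun c => cellTile c = k),
      F (X c.1) (X (c.1+1)) (Y c.2) (Y (c.2+1)) = B (T.w k) (T.h k) := by
    intro k
    obtain ⟨i₁, hi₁, hXi₁⟩ := hXsurj _ (hpxmem k)
    obtain ⟨i₂, hi₂, hXi₂⟩ := hXsurj _ (hpxwmem k)
    obtain ⟨j₁, hj₁, hYj₁⟩ := hYsurj _ (hpymem k)
    obtain ⟨j₂, hj₂, hYj₂⟩ := hYsurj _ (hpyhmem k)
    have hi12 : i₁ ≤ i₂ := by
      have : X i₁ ≤ X i₂ := by rw [hXi₁, hXi₂]; linarith [T.w_pos k]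
      exact (hXle i₁ i₂ hi₁ hi₂).1 this
    have hj12 : j₁ ≤ j₂ := by
      have : Y j₁ ≤ Y j₂ := by rw [hYj₁, hYj₂]; linarith [T.h_pos k]
      exact (hYle j₁ j₂ hj₁ hj₂).1 this
    have hfilter : cells.filter (fun c => cellTile c = k)
        = Finset.Ico i₁ i₂ ×ˢ Finset.Ico j₁ j₂ := by
      ext c
      simp only [Finset.mem_filter, hcells, Finset.mem_product, Finset.mem_range,
        Finset.mem_Ico]
      constructor
      · rintro ⟨⟨hc1, hc2⟩, hck⟩
        have hcc : c ∈ cells := by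
          simp only [hcells, Finset.mem_product, Finset.mem_range]; exact ⟨hc1, hc2⟩
        have hPc := hspec c (hex c hcc)
        rw [hck] at hPc
        obtain ⟨h1, h2, h3, h4⟩ := hPc
        refine ⟨⟨?_, ?_⟩, ?_, ?_⟩
        · rw [← hXi₁] at h1; exact (hXle i₁ c.1 hi₁ (by omega)).1 h1
        · rw [← hXi₂] at h2
          have := (hXle (c.1+1) i₂ (by omega) hi₂).1 h2
          omega
        · rw [← hYj₁] at h3; exact (hYle j₁ c.2 hj₁ (by omega)).1 h3
        · rw [← hYj₂] at h4
          have := (hYle (c.2+1) j₂ (by omega) hj₂).1 h4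
          omega
      · rintro ⟨⟨h1, h2⟩, h3, h4⟩
        have hc1 : c.1 + 1 < N := by omega
        have hc2 : c.2 + 1 < M := by omega
        have hPck : P c k := by
          refine ⟨?_, ?_, ?_, ?_⟩
          · rw [← hXi₁]; exact (hXle i₁ c.1 hi₁ (by omega)).2 h1
          · rw [← hXi₂]; exact (hXle (c.1+1) i₂ hc1 hi₂).2 (by omega)
          · rw [← hYj₁]; exact (hYle j₁ c.2 hj₁ (by omega)).2 h3
          · rw [← hYj₂]; exact (hYle (c.2+1) j₂ hc2 hj₂).2 (by omega)
        have hcc : c ∈ cells := by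
          simp only [hcells, Finset.mem_product, Finset.mem_range]; omega
        refine ⟨⟨by omega, by omega⟩, ?_⟩
        exact huniq c hcc _ k (hspec c ⟨k, hPck⟩) hPck
    rw [hfilter]
    have := prod_telescope (fun i j => B (X i) (Y j)) i₁ i₂ j₁ j₂ hi12 hj12
    rw [show (∑ c ∈ Finset.Ico i₁ i₂ ×ˢ Finset.Ico j₁ j₂,
        F (X c.1) (X (c.1+1)) (Y c.2) (Y (c.2+1))) = _ from this]
    simp only [hXi₁, hXi₂, hYj₁, hYj₂]
    have e1 : ∀ y, B (T.px k + T.w k) y = B (T.px k) y + B (T.w k) y := fun y => hB1 _ _ _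
    have e2 : B (T.w k) (T.py k + T.h k) = B (T.w k) (T.py k) + B (T.w k) (T.h k) :=
      hB2 _ _ _
    rw [e1, e1, e2]; ring
  rw [← main1, main2]
  exact Finset.sum_congr rfl (fun k _ => main3 k)


section Alg

noncomputable def rtK (p : ℚ) (sq : ℝ) (hsq : sq^2 = (p:ℝ)) (hirr : Irrational sq) : Subfield ℝ where
  carrier := {x | ∃ a c : ℚ, x = (a:ℝ) + (c:ℝ) * sq}
  zero_mem' := ⟨0, 0, by norm_num⟩
  one_mem' := ⟨1, 0, by norm_num⟩
  add_mem' := by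
    rintro x y ⟨xa, xb, rfl⟩ ⟨ya, yb, rfl⟩
    exact ⟨xa+ya, xb+yb, by push_cast; ring⟩
  neg_mem' := by
    rintro x ⟨xa, xb, rfl⟩
    exact ⟨-xa, -xb, by push_cast; ring⟩
  mul_mem' := by
    rintro x y ⟨xa, xb, rfl⟩ ⟨ya, yb, rfl⟩
    exact ⟨xa*ya + p*xb*yb, xa*yb + xb*ya, by push_cast; linear_combination ((xb:ℝ)*yb)*hsq⟩
  inv_mem' := by
    rintro x ⟨xa, xb, rfl⟩
    by_cases hx : (xa:ℝ) + (xb:ℝ)*sq = 0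
    · rw [hx]; exact ⟨0, 0, by norm_num⟩
    · have hxb : (xa:ℝ) - (xb:ℝ)*sq ≠ 0 := by
        intro h0
        by_cases hb : xb = 0
        · apply hx; rw [hb] at h0 ⊢; simpa using h0
        · apply hirr
          refine ⟨xa/xb, ?_⟩
          have hbR : (xb:ℝ) ≠ 0 := by exact_mod_cast hb
          push_cast
          field_simp
          linarith
      have hDR : ((xa^2 - p*xb^2 : ℚ):ℝ) = ((xa:ℝ) + xb*sq) * ((xa:ℝ) - xb*sq) := by
        push_cast; linear_combination ((xb:ℝ)^2)*hsq
      have hDne : ((xa^2 - p*xb^2 : ℚ):ℝ) ≠ 0 := by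
        rw [hDR]; exact mul_ne_zero hx hxb
      have hDne' : xa^2 - p*xb^2 ≠ 0 := by exact_mod_cast hDne
      refine ⟨xa/(xa^2 - p*xb^2), -xb/(xa^2 - p*xb^2), ?_⟩
      apply inv_eq_of_mul_eq_one_right
      have hD2 : (xa:ℝ) ^ 2 - (p:ℝ) * (xb:ℝ) ^ 2 ≠ 0 := by push_cast at hDne; exact hDne
      push_cast
      have hD3 : (xa:ℝ) ^ 2 - (xb:ℝ) ^ 2 * (p:ℝ) ≠ 0 := by rw [mul_comm]; exact hD2
      field_simp [hD2, hD3]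
      linear_combination (-((xb:ℝ)^2))*hsq

lemma rt_uniq (sq : ℝ) (hirr : Irrational sq) (a b c d : ℚ)
    (h : (a:ℝ) + b*sq = c + d*sq) : a = c ∧ b = d := by
  by_cases hbd : b = d
  · subst hbd
    have : (a:ℝ) = c := by linarith
    exact ⟨by exact_mod_cast this, rfl⟩
  · exfalso
    apply hirr
    refine ⟨(a-c)/(d-b), ?_⟩
    have hbd' : (d:ℝ) - b ≠ 0 := by
      intro h0
      apply hbd
      have : (b:ℝ) = d := by linarith
      exact_mod_cast this
    push_cast
    field_simp
    linarith

variable (p : ℚ) (sq : ℝ) (hsq : sq^2 = (p:ℝ)) (hirr : Irrational sq)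

noncomputable def caK (t : rtK p sq hsq hirr) : ℚ := t.2.choose
noncomputable def cbK (t : rtK p sq hsq hirr) : ℚ := t.2.choose_spec.choose

lemma coord_spec (t : rtK p sq hsq hirr) :
    (t:ℝ) = (caK p sq hsq hirr t : ℝ) + (cbK p sq hsq hirr t : ℝ) * sq :=
  t.2.choose_spec.choose_spec

lemma coord_eq (t : rtK p sq hsq hirr) (A B : ℚ) (h : (t:ℝ) = (A:ℝ) + (B:ℝ)*sq) :
    caK p sq hsq hirr t = A ∧ cbK p sq hsq hirr t = B := by
  have h2 := coord_spec p sq hsq hirr t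
  exact rt_uniq sq hirr _ _ _ _ (by rw [← h2, h])

noncomputable def sigK (t : rtK p sq hsq hirr) : ℝ :=
  (caK p sq hsq hirr t : ℝ) - (cbK p sq hsq hirr t : ℝ) * sq

end Alg


section Alg2

variable (p : ℚ) (sq : ℝ) (hsq : sq^2 = (p:ℝ)) (hirr : Irrational sq)

lemma sig_add (t u : rtK p sq hsq hirr) :
    sigK p sq hsq hirr (t + u) = sigK p sq hsq hirr t + sigK p sq hsq hirr u := by
  have h : ((t + u : rtK p sq hsq hirr):ℝ)
      = ((caK p sq hsq hirr t + caK p sq hsq hirr u : ℚ):ℝ)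
      + ((cbK p sq hsq hirr t + cbK p sq hsq hirr u : ℚ):ℝ) * sq := by
    push_cast
    rw [coord_spec p sq hsq hirr t, coord_spec p sq hsq hirr u]
    ring
  obtain ⟨h1, h2⟩ := coord_eq p sq hsq hirr _ _ _ h
  unfold sigK
  rw [h1, h2]
  push_cast
  ring

lemma sig_mul (t u : rtK p sq hsq hirr) :
    sigK p sq hsq hirr (t * u) = sigK p sq hsq hirr t * sigK p sq hsq hirr u := by
  have h : ((t * u : rtK p sq hsq hirr):ℝ)
      = ((caK p sq hsq hirr t * caK p sq hsq hirr u
          + p * (cbK p sq hsq hirr t * cbK p sq hsq hirr u) : ℚ):ℝ)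
      + ((caK p sq hsq hirr t * cbK p sq hsq hirr u
          + cbK p sq hsq hirr t * caK p sq hsq hirr u : ℚ):ℝ) * sq := by
    push_cast
    rw [coord_spec p sq hsq hirr t, coord_spec p sq hsq hirr u]
    linear_combination ((cbK p sq hsq hirr t : ℝ) * (cbK p sq hsq hirr u : ℝ)) * hsq
  obtain ⟨h1, h2⟩ := coord_eq p sq hsq hirr _ _ _ h
  unfold sigK
  rw [h1, h2]
  push_cast
  linear_combination (-((cbK p sq hsq hirr t : ℝ) * (cbK p sq hsq hirr u : ℝ))) * hsq

lemma sig_one : sigK p sq hsq hirr 1 = 1 := by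
  obtain ⟨h1, h2⟩ := coord_eq p sq hsq hirr 1 1 0 (by push_cast; ring)
  unfold sigK
  rw [h1, h2]
  push_cast
  ring

lemma sig_ne_zero (t : rtK p sq hsq hirr) (ht : t ≠ 0) : sigK p sq hsq hirr t ≠ 0 := by
  intro h0
  unfold sigK at h0
  by_cases hb : cbK p sq hsq hirr t = 0
  · rw [hb] at h0
    norm_num at h0
    have hval : (t:ℝ) = 0 := by
      rw [coord_spec p sq hsq hirr t, h0, hb]
      norm_num
    exact ht (by exact_mod_cast hval)
  · apply hirr
    refine ⟨caK p sq hsq hirr t / cbK p sq hsq hirr t, ?_⟩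
    have hbR : ((cbK p sq hsq hirr t : ℚ):ℝ) ≠ 0 := by exact_mod_cast hb
    push_cast
    field_simp
    linarith

lemma sig_val (t : rtK p sq hsq hirr) (A B : ℚ) (h : (t:ℝ) = (A:ℝ) + (B:ℝ)*sq) :
    sigK p sq hsq hirr t = (A:ℝ) - (B:ℝ)*sq := by
  obtain ⟨h1, h2⟩ := coord_eq p sq hsq hirr t A B h
  unfold sigK
  rw [h1, h2]

/-- The quadratic-form pairing on `K`. -/
noncomputable def QK (A₁ A₂ A₃ : ℝ) (μ ν : rtK p sq hsq hirr) : ℝ :=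
  A₁*(μ:ℝ)*(ν:ℝ) + A₂*((μ:ℝ)*(sigK p sq hsq hirr ν) + (sigK p sq hsq hirr μ)*(ν:ℝ))
    + A₃*(sigK p sq hsq hirr μ)*(sigK p sq hsq hirr ν)

lemma tiling_identity {z : ℝ} (hz : 0 < z) (T : RectTiling z)
    (G : ℝ →ₗ[rtK p sq hsq hirr] rtK p sq hsq hirr) (A₁ A₂ A₃ : ℝ) :
    QK p sq hsq hirr A₁ A₂ A₃ (G 1) (G z)
      = ∑ k, QK p sq hsq hirr A₁ A₂ A₃ (G (T.w k)) (G (T.h k)) := by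
  apply tiling_biadditive hz T (fun s t => QK p sq hsq hirr A₁ A₂ A₃ (G s) (G t))
  · intro x y u
    rw [map_add]
    unfold QK
    rw [sig_add]
    push_cast
    ring
  · intro x y u
    rw [map_add]
    unfold QK
    rw [sig_add]
    push_cast
    ring

lemma smul_real (c : rtK p sq hsq hirr) (t : ℝ) : c • t = (c:ℝ) * t := rfl

lemma G_mul (G : ℝ →ₗ[rtK p sq hsq hirr] rtK p sq hsq hirr)
    (c : rtK p sq hsq hirr) (t : ℝ) : G ((c:ℝ) * t) = c * G t := by
  rw [← smul_real p sq hsq hirr c t, map_smul]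
  rfl

lemma exists_G_notmem {z : ℝ} (hzK : z ∉ (rtK p sq hsq hirr : Set ℝ))
    (μ : rtK p sq hsq hirr) :
    ∃ G : ℝ →ₗ[rtK p sq hsq hirr] rtK p sq hsq hirr, G 1 = 1 ∧ G z = μ := by
  classical
  have h1K : (1:ℝ) ∈ (rtK p sq hsq hirr : Set ℝ) := (rtK p sq hsq hirr).one_mem
  have hz1 : z ∉ ({1} : Set ℝ) := by
    intro h; rw [Set.mem_singleton_iff] at h; rw [h] at hzK; exact hzK h1K
  have hzsp : z ∉ Submodule.span (rtK p sq hsq hirr) ({1} : Set ℝ) := by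
    intro h
    rw [Submodule.mem_span_singleton] at h
    obtain ⟨c, hc⟩ := h
    apply hzK
    rw [← hc, show c • (1:ℝ) = (c:ℝ)*1 from rfl, mul_one]
    exact c.2
  have hli : LinearIndepOn (rtK p sq hsq hirr) id (insert z {1} : Set ℝ) := by
    rw [linearIndepOn_id_insert hz1]
    exact ⟨(linearIndepOn_singleton_iff _).2 one_ne_zero, hzsp⟩
  set b := Module.Basis.extend hli with hb
  set G := b.constr ℕ (fun e => if (e:ℝ) = z then μ else 1) with hG
  have hze : z ∈ hli.extend (Set.subset_univ _) :=
    hli.subset_extend _ (Set.mem_insert _ _)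
  have h1e : (1:ℝ) ∈ hli.extend (Set.subset_univ _) :=
    hli.subset_extend _ (Set.mem_insert_of_mem _ rfl)
  refine ⟨G, ?_, ?_⟩
  · have : G (b ⟨(1:ℝ), h1e⟩) = if ((⟨(1:ℝ), h1e⟩ : hli.extend _):ℝ) = z then μ else 1 :=
      Module.Basis.constr_basis b ℕ _ _
    rw [Module.Basis.extend_apply_self] at this
    rw [this]
    rw [if_neg]
    intro h
    exact hzK (h ▸ h1K)
  · have : G (b ⟨z, hze⟩) = if ((⟨z, hze⟩ : hli.extend _):ℝ) = z then μ else 1 :=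
      Module.Basis.constr_basis b ℕ _ _
    rw [Module.Basis.extend_apply_self] at this
    rw [this, if_pos rfl]

lemma exists_G_any {t : ℝ} (ht : t ≠ 0) :
    ∃ G : ℝ →ₗ[rtK p sq hsq hirr] rtK p sq hsq hirr, G 1 = 1 ∧ G t ≠ 0 := by
  classical
  by_cases htK : t ∈ (rtK p sq hsq hirr : Set ℝ)
  · have hli : LinearIndepOn (rtK p sq hsq hirr) id ({1} : Set ℝ) :=
      (linearIndepOn_singleton_iff _).2 one_ne_zero
    set b := Module.Basis.extend hli with hb
    set G := b.constr ℕ (fun _ => (1 : rtK p sq hsq hirr)) with hG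
    have h1e : (1:ℝ) ∈ hli.extend (Set.subset_univ _) := hli.subset_extend _ rfl
    have hG1 : G 1 = 1 := by
      have : G (b ⟨(1:ℝ), h1e⟩) = 1 := Module.Basis.constr_basis b ℕ _ _
      rwa [Module.Basis.extend_apply_self] at this
    refine ⟨G, hG1, ?_⟩
    have : G t = G ((⟨t, htK⟩ : rtK p sq hsq hirr) • (1:ℝ)) := by
      rw [show (⟨t, htK⟩ : rtK p sq hsq hirr) • (1:ℝ) = t*1 from rfl, mul_one]
    rw [this, map_smul, hG1]
    intro h0
    apply ht
    have h1 : (⟨t, htK⟩ : rtK p sq hsq hirr) = 0 := by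
      rwa [smul_eq_mul, mul_one] at h0
    have := congrArg Subtype.val h1
    simpa using this
  · obtain ⟨G, hG1, hGt⟩ := exists_G_notmem p sq hsq hirr htK 1
    exact ⟨G, hG1, by rw [hGt]; exact one_ne_zero⟩

end Alg2

lemma quad_nonpos (A B C v₁ v₂ : ℝ) (hA : A < 0) (hdisc : B^2 - 4*A*C ≤ 0) :
    A*v₁^2 + B*v₁*v₂ + C*v₂^2 ≤ 0 := by
  nlinarith [sq_nonneg (2*A*v₁ + B*v₂), sq_nonneg v₂, sq_nonneg v₁]

lemma quad_neg (A B C v₁ v₂ : ℝ) (hA : A < 0) (hdisc : B^2 - 4*A*C < 0)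
    (hv : v₁ ≠ 0 ∨ v₂ ≠ 0) : A*v₁^2 + B*v₁*v₂ + C*v₂^2 < 0 := by
  rcases hv with hv | hv
  · by_cases h2 : v₂ = 0
    · subst h2; nlinarith [sq_abs v₁, pow_pos (abs_pos.2 hv) 2]
    · nlinarith [sq_nonneg (2*A*v₁ + B*v₂), sq_abs v₂, pow_pos (abs_pos.2 h2) 2]
  · nlinarith [sq_nonneg (2*A*v₁ + B*v₂), sq_abs v₂, pow_pos (abs_pos.2 hv) 2]

theorem diverse_tiling_neg_conj_necessary (p : ℚ) (hp : 0 < p)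
    (hirr : Irrational (Real.sqrt p))
    (n : ℕ) (hn : 2 ≤ n) (a b : Fin n → ℚ) (X : Fin n → ℝ)
    (hX : ∀ i, X i = (a i : ℝ) + (b i : ℝ) * Real.sqrt p)
    (hXpos : ∀ i, 0 < X i)
    (hdist : ∀ i j, i ≠ j → Irrational (X i / X j) ∧ Irrational (X i * X j))
    (hconj : ∀ i, (a i : ℝ) - (b i : ℝ) * Real.sqrt p < 0)
    (z : ℝ) (hz : 0 < z) (htile : DiverselyTileable z X) :
    ∃ e f : ℚ, z = (e : ℝ) + (f : ℝ) * Real.sqrt p ∧ 0 < f ∧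
      |e| / f < Finset.univ.sup' ⟨⟨0, by omega⟩, Finset.mem_univ _⟩
        (fun i => |a i| / b i) := by
  classical
  obtain ⟨T, hall, hdiv⟩ := htile
  set sq : ℝ := Real.sqrt p with hsqdef
  have hppos : (0:ℝ) < (p:ℝ) := by exact_mod_cast hp
  have hsq : sq^2 = (p:ℝ) := Real.sq_sqrt hppos.le
  have hsqpos : 0 < sq := Real.sqrt_pos.2 hppos
  have hXK : ∀ i, X i ∈ (rtK p sq hsq hirr : Set ℝ) := fun i => ⟨a i, b i, hX i⟩
  set xt : Fin n → rtK p sq hsq hirr := fun i => ⟨X i, hXK i⟩ with hxt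
  have hsigX : ∀ i, sigK p sq hsq hirr (xt i) = (a i : ℝ) - (b i : ℝ)*sq :=
    fun i => sig_val p sq hsq hirr _ _ _ (hX i)
  have hbpos : ∀ i, 0 < b i := by
    intro i
    have h1 := hXpos i; rw [hX i] at h1
    have h2 := hconj i
    have h3 : (0:ℝ) < (b i:ℝ) := by nlinarith
    exact_mod_cast h3
  have habs : ∀ i, |(a i:ℝ)| < (b i:ℝ) * sq := by
    intro i
    rw [abs_lt]
    constructor
    · have := hXpos i; rw [hX i] at this; linarith
    · linarith [hconj i]
  -- the per-tile term computation
  have term_eq : ∀ (k : Fin T.m) (i : Fin n), T.ratioOK k (X i) →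
      ∃ t : ℝ, 0 < t ∧ ∀ (A₁ A₂ A₃ : ℝ) (G : ℝ →ₗ[rtK p sq hsq hirr] rtK p sq hsq hirr),
        QK p sq hsq hirr A₁ A₂ A₃ (G (T.w k)) (G (T.h k))
          = A₁*(X i)*((G t : ℝ))^2
            + A₂*(X i + ((a i:ℝ) - (b i:ℝ)*sq))*(((G t : ℝ))*(sigK p sq hsq hirr (G t)))
            + A₃*((a i:ℝ) - (b i:ℝ)*sq)*(sigK p sq hsq hirr (G t))^2 := by
    intro k i hri
    rcases hri with hc | hc
    · refine ⟨T.w k, T.w_pos k, ?_⟩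
      intro A₁ A₂ A₃ G
      have hwne : T.w k ≠ 0 := ne_of_gt (T.w_pos k)
      rw [div_eq_iff hwne] at hc
      rw [hc]
      rw [show (X i) = ((xt i : rtK p sq hsq hirr):ℝ) from rfl]
      rw [G_mul p sq hsq hirr G (xt i) (T.w k)]
      unfold QK
      rw [sig_mul, hsigX]
      push_cast
      ring
    · refine ⟨T.h k, T.h_pos k, ?_⟩
      intro A₁ A₂ A₃ G
      have hhne : T.h k ≠ 0 := ne_of_gt (T.h_pos k)
      rw [div_eq_iff hhne] at hc
      rw [hc]
      rw [show (X i) = ((xt i : rtK p sq hsq hirr):ℝ) from rfl]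
      rw [G_mul p sq hsq hirr G (xt i) (T.h k)]
      unfold QK
      rw [sig_mul, hsigX]
      push_cast
      ring
  -- Step 1 : z ∈ K
  have hzK : z ∈ (rtK p sq hsq hirr : Set ℝ) := by
    by_contra hzK
    have hmem : -sq ∈ (rtK p sq hsq hirr : Set ℝ) := ⟨0, -1, by push_cast; ring⟩
    obtain ⟨G, hG1, hGz⟩ := exists_G_notmem p sq hsq hirr hzK ⟨-sq, hmem⟩
    have hid := tiling_identity p sq hsq hirr hz T G 0 0 1
    rw [hG1, hGz] at hid
    have hL : QK p sq hsq hirr 0 0 1 1 ⟨-sq, hmem⟩ = sq := by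
      unfold QK
      rw [sig_one, sig_val p sq hsq hirr _ 0 (-1) (by push_cast; ring)]
      push_cast
      ring
    rw [hL] at hid
    have hR : ∀ k, QK p sq hsq hirr 0 0 1 (G (T.w k)) (G (T.h k)) ≤ 0 := by
      intro k
      obtain ⟨i, hi⟩ := hall k
      obtain ⟨t, htpos, hfm⟩ := term_eq k i hi
      rw [hfm 0 0 1 G]
      have h1 := hconj i
      nlinarith [sq_nonneg (sigK p sq hsq hirr (G t))]
    have : (∑ k, QK p sq hsq hirr 0 0 1 (G (T.w k)) (G (T.h k))) ≤ 0 :=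
      Finset.sum_nonpos (fun k _ => hR k)
    linarith
  set zt : rtK p sq hsq hirr := ⟨z, hzK⟩ with hzt
  set e : ℚ := caK p sq hsq hirr zt with he
  set f : ℚ := cbK p sq hsq hirr zt with hf
  have hze : z = (e:ℝ) + (f:ℝ)*sq := coord_spec p sq hsq hirr zt
  have hsigz : sigK p sq hsq hirr zt = (e:ℝ) - (f:ℝ)*sq := by
    unfold sigK; rw [← he, ← hf]
  -- a G with G 1 = 1 sends z to zt
  have hGz_eq : ∀ G : ℝ →ₗ[rtK p sq hsq hirr] rtK p sq hsq hirr, G 1 = 1 → G z = zt := by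
    intro G hG1
    have h1 : G ((zt : ℝ) * 1) = zt * G 1 := G_mul p sq hsq hirr G zt 1
    rw [mul_one] at h1
    rw [show (zt:ℝ) = z from rfl] at h1
    rw [h1, hG1, mul_one]
  -- Step 2 : conjugate of z is negative
  have hsigz_neg : (e:ℝ) - (f:ℝ)*sq < 0 := by
    obtain ⟨G, hG1, -⟩ := exists_G_any p sq hsq hirr (one_ne_zero (α := ℝ))
    have hid := tiling_identity p sq hsq hirr hz T G 0 0 1
    rw [hG1, hGz_eq G hG1] at hid
    have hL : QK p sq hsq hirr 0 0 1 1 zt = (e:ℝ) - (f:ℝ)*sq := by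
      unfold QK
      rw [sig_one, hsigz]
      ring
    rw [hL] at hid
    have hR : ∀ k, QK p sq hsq hirr 0 0 1 (G (T.w k)) (G (T.h k)) ≤ 0 := by
      intro k
      obtain ⟨i, hi⟩ := hall k
      obtain ⟨t, htpos, hfm⟩ := term_eq k i hi
      rw [hfm 0 0 1 G]
      have h1 := hconj i
      nlinarith [sq_nonneg (sigK p sq hsq hirr (G t))]
    have hsum : (∑ k, QK p sq hsq hirr 0 0 1 (G (T.w k)) (G (T.h k))) ≤ 0 :=
      Finset.sum_nonpos (fun k _ => hR k)
    have hle : (e:ℝ) - (f:ℝ)*sq ≤ 0 := by linarith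
    rcases lt_or_eq_of_le hle with h | h
    · exact h
    · exfalso
      obtain ⟨h1, h2⟩ := rt_uniq sq hirr e (-f) 0 0 (by push_cast; linarith)
      rw [hze] at hz
      rw [h1] at hz
      have hf0 : f = 0 := by linarith [neg_eq_zero.1 h2]
      rw [hf0] at hz
      norm_num at hz
  have hfpos : 0 < f := by
    have h1 : (0:ℝ) < (f:ℝ)*sq := by
      rw [hze] at hz; linarith
    have h2 : (0:ℝ) < (f:ℝ) := by
      by_contra hcon
      push_neg at hcon
      nlinarith
    exact_mod_cast h2
  refine ⟨e, f, hze, hfpos, ?_⟩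
  by_contra hcon
  push_neg at hcon
  set M : ℚ := Finset.univ.sup' ⟨⟨0, by omega⟩, Finset.mem_univ _⟩ (fun i => |a i| / b i)
    with hM
  have hMle : ∀ i, |a i| ≤ M * b i := by
    intro i
    have h1 : |a i| / b i ≤ M := by
      rw [hM]; exact Finset.le_sup' (fun i => |a i| / b i) (Finset.mem_univ i)
    rwa [div_le_iff₀ (hbpos i)] at h1
  obtain ⟨i₀, -, hi₀⟩ := Finset.exists_mem_eq_sup'
    (⟨⟨0, by omega⟩, Finset.mem_univ _⟩ : (Finset.univ : Finset (Fin n)).Nonempty)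
    (fun i => |a i| / b i)
  have hMi₀ : M = |a i₀| / b i₀ := by rw [hM]; exact hi₀
  have hM0 : 0 ≤ M := by
    rw [hMi₀]
    exact div_nonneg (abs_nonneg _) (hbpos i₀).le
  have hMf : M * f ≤ |e| := by
    rwa [le_div_iff₀ hfpos] at hcon
  have hMlt : (M:ℝ) < sq := by
    have h1 : (M:ℝ) = |(a i₀:ℝ)| / (b i₀:ℝ) := by
      rw [hMi₀]; push_cast; ring
    rw [h1, div_lt_iff₀ (by exact_mod_cast hbpos i₀)]
    calc |(a i₀:ℝ)| < (b i₀:ℝ)*sq := habs i₀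
    _ = sq * (b i₀:ℝ) := by ring
  have hpM : (0:ℝ) < (p:ℝ) - (M:ℝ)^2 := by
    have h0 : (0:ℝ) ≤ (M:ℝ) := by exact_mod_cast hM0
    nlinarith
  set s₀ : ℝ := (M:ℝ)^2 / ((p:ℝ) - (M:ℝ)^2) with hs₀def
  have hs₀ : 0 ≤ s₀ := by positivity
  -- the two distinguished indices
  set i₁ : Fin n := if i₀ = ⟨0, by omega⟩ then ⟨1, by omega⟩ else ⟨0, by omega⟩ with hi₁
  have hne10 : i₁ ≠ i₀ := by
    rw [hi₁]
    split
    · rename_i hh; rw [hh]; intro hcc; exact absurd (congrArg Fin.val hcc) (by simp)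
    · rename_i hh; intro hcc; exact hh hcc.symm
  have hstrict : |a i₁| < M * b i₁ := by
    rcases lt_or_eq_of_le (hMle i₁) with h | h
    · exact h
    · exfalso
      have hMb0 : M * b i₀ = |a i₀| := by
        rw [hMi₀]
        exact div_mul_cancel₀ _ (hbpos i₀).ne'
      have habs_eq : |a i₁ * b i₀| = |a i₀ * b i₁| := by
        rw [abs_mul, abs_mul, abs_of_pos (hbpos i₀), abs_of_pos (hbpos i₁)]
        rw [h, ← hMb0]
        ring
      rcases abs_eq_abs.1 habs_eq with hcase | hcase
      · -- parallel : X i₁ / X i₀ rational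
        have hX0ne : X i₀ ≠ 0 := ne_of_gt (hXpos i₀)
        have hb0ne : ((b i₀:ℚ):ℝ) ≠ 0 := by exact_mod_cast (hbpos i₀).ne'
        have hratio : X i₁ / X i₀ = ((b i₁ / b i₀ : ℚ):ℝ) := by
          rw [div_eq_iff hX0ne]
          rw [hX i₁, hX i₀]
          push_cast
          have hc : (a i₁:ℝ) * (b i₀:ℝ) = (a i₀:ℝ) * (b i₁:ℝ) := by exact_mod_cast hcase
          field_simp
          nlinarith [hc]
        have hcontr : Irrational ((b i₁ / b i₀ : ℚ):ℝ) := hratio ▸ (hdist i₁ i₀ hne10).1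
        exact (Rat.not_irrational _) hcontr
      · -- antiparallel : X i₁ * X i₀ rational
        have hc : (a i₁:ℝ) * (b i₀:ℝ) = -((a i₀:ℝ) * (b i₁:ℝ)) := by exact_mod_cast hcase
        have hprod : X i₁ * X i₀ = ((a i₁ * a i₀ + b i₁ * b i₀ * p : ℚ):ℝ) := by
          rw [hX i₁, hX i₀]
          push_cast
          linear_combination ((b i₁:ℝ)*(b i₀:ℝ))*hsq + sq*hc
        have hcontr : Irrational ((a i₁ * a i₀ + b i₁ * b i₀ * p : ℚ):ℝ) :=
          hprod ▸ (hdist i₁ i₀ hne10).2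
        exact (Rat.not_irrational _) hcontr
  -- discriminant bounds
  have hcast_ab : ∀ i, |(a i:ℝ)| ≤ (M:ℝ) * (b i:ℝ) := by
    intro i
    have := hMle i
    push_cast
    exact_mod_cast this
  have hdisc_le : ∀ i,
      (X i + ((a i:ℝ) - (b i:ℝ)*sq))^2
        - 4*(-(X i))*(s₀*((a i:ℝ) - (b i:ℝ)*sq)) ≤ 0 := by
    intro i
    have h1 : X i + ((a i:ℝ) - (b i:ℝ)*sq) = 2*(a i:ℝ) := by rw [hX i]; ring
    have h2 : X i * ((a i:ℝ) - (b i:ℝ)*sq) = (a i:ℝ)^2 - (b i:ℝ)^2*(p:ℝ) := by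
      rw [hX i]; linear_combination (-((b i:ℝ)^2))*hsq
    have hai : (a i:ℝ)^2 ≤ (M:ℝ)^2*(b i:ℝ)^2 := by
      have h3 := hcast_ab i
      nlinarith [sq_abs ((a i:ℝ)), abs_nonneg ((a i:ℝ))]
    have key : ((2*(a i:ℝ))^2 + 4*s₀*((a i:ℝ)^2 - (b i:ℝ)^2*(p:ℝ))) * ((p:ℝ) - (M:ℝ)^2)
        = 4*(p:ℝ)*((a i:ℝ)^2 - (M:ℝ)^2*(b i:ℝ)^2) := by
      rw [hs₀def]
      field_simp
      ring
    have hmain : (2*(a i:ℝ))^2 + 4*s₀*((a i:ℝ)^2 - (b i:ℝ)^2*(p:ℝ)) ≤ 0 := by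
      nlinarith [key, hai, hpM, hppos]
    calc (X i + ((a i:ℝ) - (b i:ℝ)*sq))^2 - 4*(-(X i))*(s₀*((a i:ℝ) - (b i:ℝ)*sq))
        = (2*(a i:ℝ))^2 + 4*s₀*((a i:ℝ)^2 - (b i:ℝ)^2*(p:ℝ)) := by
          rw [h1]; linear_combination (4*s₀)*h2
      _ ≤ 0 := hmain
  have hdisc_lt :
      (X i₁ + ((a i₁:ℝ) - (b i₁:ℝ)*sq))^2
        - 4*(-(X i₁))*(s₀*((a i₁:ℝ) - (b i₁:ℝ)*sq)) < 0 := by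
    have h1 : X i₁ + ((a i₁:ℝ) - (b i₁:ℝ)*sq) = 2*(a i₁:ℝ) := by rw [hX i₁]; ring
    have h2 : X i₁ * ((a i₁:ℝ) - (b i₁:ℝ)*sq) = (a i₁:ℝ)^2 - (b i₁:ℝ)^2*(p:ℝ) := by
      rw [hX i₁]; linear_combination (-((b i₁:ℝ)^2))*hsq
    have hstrictR : |(a i₁:ℝ)| < (M:ℝ) * (b i₁:ℝ) := by exact_mod_cast hstrict
    have hai : (a i₁:ℝ)^2 < (M:ℝ)^2*(b i₁:ℝ)^2 := by
      nlinarith [sq_abs ((a i₁:ℝ)), abs_nonneg ((a i₁:ℝ))]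
    have key : ((2*(a i₁:ℝ))^2 + 4*s₀*((a i₁:ℝ)^2 - (b i₁:ℝ)^2*(p:ℝ))) * ((p:ℝ) - (M:ℝ)^2)
        = 4*(p:ℝ)*((a i₁:ℝ)^2 - (M:ℝ)^2*(b i₁:ℝ)^2) := by
      rw [hs₀def]
      field_simp
      ring
    have hmain : (2*(a i₁:ℝ))^2 + 4*s₀*((a i₁:ℝ)^2 - (b i₁:ℝ)^2*(p:ℝ)) < 0 := by
      nlinarith [key, hai, hpM, hppos]
    calc (X i₁ + ((a i₁:ℝ) - (b i₁:ℝ)*sq))^2 - 4*(-(X i₁))*(s₀*((a i₁:ℝ) - (b i₁:ℝ)*sq))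
        = (2*(a i₁:ℝ))^2 + 4*s₀*((a i₁:ℝ)^2 - (b i₁:ℝ)^2*(p:ℝ)) := by
          rw [h1]; linear_combination (4*s₀)*h2
      _ < 0 := hmain
  -- kernel vector
  set D : ℝ := (e:ℝ)^2 + s₀*((e:ℝ)^2 - (f:ℝ)^2*(p:ℝ)) with hDdef
  have hMfR : (M:ℝ)*(f:ℝ) ≤ |(e:ℝ)| := by exact_mod_cast hMf
  have hD0 : 0 ≤ D := by
    have he2 : (M:ℝ)^2*(f:ℝ)^2 ≤ (e:ℝ)^2 := by
      have hfR : (0:ℝ) < (f:ℝ) := by exact_mod_cast hfpos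
      have hM0R : (0:ℝ) ≤ (M:ℝ) := by exact_mod_cast hM0
      have h4 : (0:ℝ) ≤ (M:ℝ)*(f:ℝ) := by positivity
      have h5 := mul_self_le_mul_self h4 hMfR
      nlinarith [h5, sq_abs ((e:ℝ))]
    have keyz : D * ((p:ℝ) - (M:ℝ)^2) = (p:ℝ)*((e:ℝ)^2 - (M:ℝ)^2*(f:ℝ)^2) := by
      rw [hDdef, hs₀def]
      field_simp
      ring
    nlinarith [keyz, hpM, hppos]
  set v₁ : ℝ := ((e:ℝ) + Real.sqrt D)/z with hv₁def
  have hv₁z : v₁ * z = (e:ℝ) + Real.sqrt D := by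
    rw [hv₁def]; field_simp
  have hsqD : Real.sqrt D ^ 2 = D := Real.sq_sqrt hD0
  have hσzz : z * ((e:ℝ) - (f:ℝ)*sq) = (e:ℝ)^2 - (f:ℝ)^2*(p:ℝ) := by
    rw [hze]; linear_combination (-((f:ℝ)^2))*hsq
  have hQz : -v₁^2*z + v₁*(2*(e:ℝ)) + s₀*((e:ℝ) - (f:ℝ)*sq) = 0 := by
    have hzne : z ≠ 0 := ne_of_gt hz
    have h2 : z * (-v₁^2*z + v₁*(2*(e:ℝ)) + s₀*((e:ℝ) - (f:ℝ)*sq))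
        = -(v₁*z)^2 + 2*(e:ℝ)*(v₁*z) + s₀*(z*((e:ℝ) - (f:ℝ)*sq)) := by ring
    rw [hv₁z, hσzz] at h2
    have h3 : -((e:ℝ) + Real.sqrt D)^2 + 2*(e:ℝ)*((e:ℝ) + Real.sqrt D)
        + s₀*((e:ℝ)^2 - (f:ℝ)^2*(p:ℝ)) = 0 := by
      linear_combination (-1:ℝ)*hsqD - hDdef
    rw [h3] at h2
    rcases mul_eq_zero.1 h2 with h | h
    · exact absurd h hzne
    · exact h
  -- the distinguished tile
  obtain ⟨k₁, hk₁⟩ := hdiv i₁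
  obtain ⟨t₁, ht₁pos, hfm₁⟩ := term_eq k₁ i₁ hk₁
  obtain ⟨G, hG1, hGt₁⟩ := exists_G_any p sq hsq hirr (ne_of_gt ht₁pos)
  have hid := tiling_identity p sq hsq hirr hz T G (-v₁^2) v₁ s₀
  rw [hG1, hGz_eq G hG1] at hid
  have hL : QK p sq hsq hirr (-v₁^2) v₁ s₀ 1 zt = 0 := by
    unfold QK
    rw [sig_one, hsigz]
    rw [show ((1 : rtK p sq hsq hirr):ℝ) = 1 by push_cast; ring]
    rw [show ((zt : rtK p sq hsq hirr):ℝ) = z from rfl]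
    calc -v₁^2*1*z + v₁*(1*((e:ℝ) - (f:ℝ)*sq) + 1*z) + s₀*1*((e:ℝ) - (f:ℝ)*sq)
        = -v₁^2*z + v₁*(2*(e:ℝ)) + s₀*((e:ℝ) - (f:ℝ)*sq) := by
          rw [hze]; ring
      _ = 0 := hQz
  rw [hL] at hid
  have hle : ∀ k, QK p sq hsq hirr (-v₁^2) v₁ s₀ (G (T.w k)) (G (T.h k)) ≤ 0 := by
    intro k
    obtain ⟨i, hi⟩ := hall k
    obtain ⟨t, htpos, hfm⟩ := term_eq k i hi
    rw [hfm (-v₁^2) v₁ s₀ G]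
    have hq := quad_nonpos (-(X i)) (X i + ((a i:ℝ) - (b i:ℝ)*sq))
      (s₀*((a i:ℝ) - (b i:ℝ)*sq)) (v₁*((G t : ℝ))) (sigK p sq hsq hirr (G t))
      (by linarith [hXpos i]) (hdisc_le i)
    calc (-v₁^2)*(X i)*((G t:ℝ))^2
          + v₁*(X i + ((a i:ℝ) - (b i:ℝ)*sq))*(((G t:ℝ))*(sigK p sq hsq hirr (G t)))
          + s₀*((a i:ℝ) - (b i:ℝ)*sq)*(sigK p sq hsq hirr (G t))^2
        = (-(X i))*(v₁*((G t:ℝ)))^2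
          + (X i + ((a i:ℝ) - (b i:ℝ)*sq))*(v₁*((G t:ℝ)))*(sigK p sq hsq hirr (G t))
          + (s₀*((a i:ℝ) - (b i:ℝ)*sq))*(sigK p sq hsq hirr (G t))^2 := by ring
      _ ≤ 0 := hq
  have hlt : QK p sq hsq hirr (-v₁^2) v₁ s₀ (G (T.w k₁)) (G (T.h k₁)) < 0 := by
    rw [hfm₁ (-v₁^2) v₁ s₀ G]
    have hsig_ne : sigK p sq hsq hirr (G t₁) ≠ 0 := sig_ne_zero p sq hsq hirr _ hGt₁
    have hq := quad_neg (-(X i₁)) (X i₁ + ((a i₁:ℝ) - (b i₁:ℝ)*sq))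
      (s₀*((a i₁:ℝ) - (b i₁:ℝ)*sq)) (v₁*((G t₁ : ℝ))) (sigK p sq hsq hirr (G t₁))
      (by linarith [hXpos i₁]) hdisc_lt (Or.inr hsig_ne)
    calc (-v₁^2)*(X i₁)*((G t₁:ℝ))^2
          + v₁*(X i₁ + ((a i₁:ℝ) - (b i₁:ℝ)*sq))*(((G t₁:ℝ))*(sigK p sq hsq hirr (G t₁)))
          + s₀*((a i₁:ℝ) - (b i₁:ℝ)*sq)*(sigK p sq hsq hirr (G t₁))^2
        = (-(X i₁))*(v₁*((G t₁:ℝ)))^2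
          + (X i₁ + ((a i₁:ℝ) - (b i₁:ℝ)*sq))*(v₁*((G t₁:ℝ)))*(sigK p sq hsq hirr (G t₁))
          + (s₀*((a i₁:ℝ) - (b i₁:ℝ)*sq))*(sigK p sq hsq hirr (G t₁))^2 := by ring
      _ < 0 := hq
  have hsum : (∑ k, QK p sq hsq hirr (-v₁^2) v₁ s₀ (G (T.w k)) (G (T.h k)))
      < ∑ _k : Fin T.m, (0:ℝ) :=
    Finset.sum_lt_sum (fun k _ => hle k) ⟨k₁, Finset.mem_univ _, hlt⟩
  rw [Finset.sum_const, smul_zero] at hsum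
  linarith [hid ▸ hsum]
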